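/- Let k be an integer with k > 1, let b₁ ∈ Ab, let l, t ∈ ℤ[1/k], and let z ∈ ℤ. Then l·z = t in ℤ[1/k] if and only if for every integer n there exists u ∈ A such that [b₁^{n}, (t,0)] = [b₁^{n·z}, (l,0)]·[b₁^{n}, [u, b₁^{n}]] in G = ℤ[1/k] ⋊ ℤ, where [x, y] = x⁻¹y⁻¹xy. -/

import Mathlib

/-- The subring `ℤ[1/k] = {z·k^i : z, i ∈ ℤ}` of `ℚ`, as a set. -/
def zkSet (k : ℤ) : Set ℚ := {q | ∃ z i : ℤ, q = (z : ℚ) * (k : ℚ) ^ i}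

theorem zkSet_neg {k : ℤ} {q : ℚ} (hq : q ∈ zkSet k) : -q ∈ zkSet k := by
  obtain ⟨z, i, rfl⟩ := hq
  exact ⟨-z, i, by push_cast; ring⟩

theorem zkSet_mul_zpow {k : ℤ} (hk : (k : ℚ) ≠ 0) {q : ℚ} (hq : q ∈ zkSet k) (j : ℤ) :
    q * (k : ℚ) ^ j ∈ zkSet k := by
  obtain ⟨z, i, rfl⟩ := hq
  exact ⟨z, i + j, by rw [zpow_add₀ hk]; ring⟩

theorem zkSet_add {k : ℤ} (hk : (k : ℚ) ≠ 0) {p q : ℚ}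
    (hp : p ∈ zkSet k) (hq : q ∈ zkSet k) : p + q ∈ zkSet k := by
  obtain ⟨z₁, i₁, rfl⟩ := hp
  obtain ⟨z₂, i₂, rfl⟩ := hq
  rcases le_total i₁ i₂ with h | h
  · refine ⟨z₁ + z₂ * k ^ (i₂ - i₁).toNat, i₁, ?_⟩
    have hpow : ((k : ℚ)) ^ ((i₂ - i₁).toNat) = (k : ℚ) ^ (i₂ - i₁) := by
      rw [← zpow_natCast, Int.toNat_of_nonneg (by omega)]
    push_cast
    rw [hpow]
    have e : (k : ℚ) ^ (i₂ - i₁) * (k : ℚ) ^ i₁ = (k : ℚ) ^ i₂ := by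
      rw [← zpow_add₀ hk, show i₂ - i₁ + i₁ = i₂ from by omega]
    linear_combination (-(z₂ : ℚ)) * e
  · refine ⟨z₂ + z₁ * k ^ (i₁ - i₂).toNat, i₂, ?_⟩
    have hpow : ((k : ℚ)) ^ ((i₁ - i₂).toNat) = (k : ℚ) ^ (i₁ - i₂) := by
      rw [← zpow_natCast, Int.toNat_of_nonneg (by omega)]
    push_cast
    rw [hpow]
    have e : (k : ℚ) ^ (i₁ - i₂) * (k : ℚ) ^ i₂ = (k : ℚ) ^ i₁ := by
      rw [← zpow_add₀ hk, show i₁ - i₂ + i₂ = i₁ from by omega]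
    linear_combination (-(z₁ : ℚ)) * e

/-- The underlying set of the semidirect product `G = ℤ[1/k] ⋊ ℤ` (modelled inside
`ℚ × ℤ`): pairs `(y, m)` with multiplication `(y₁,m₁)(y₂,m₂) = (y₁ + y₂·k^{-m₁}, m₁+m₂)`. -/
@[ext]
structure BSQ (k : ℤ) : Type where
  y : ℚ
  m : ℤ

namespace BSQ

variable {k : ℤ}

instance : Mul (BSQ k) := ⟨fun g h => ⟨g.y + h.y * (k : ℚ) ^ (-g.m), g.m + h.m⟩⟩
instance : One (BSQ k) := ⟨⟨0, 0⟩⟩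
instance : Inv (BSQ k) := ⟨fun g => ⟨-g.y * (k : ℚ) ^ g.m, -g.m⟩⟩

@[simp] theorem mul_y (g h : BSQ k) : (g * h).y = g.y + h.y * (k : ℚ) ^ (-g.m) := rfl
@[simp] theorem mul_m (g h : BSQ k) : (g * h).m = g.m + h.m := rfl
@[simp] theorem one_y : (1 : BSQ k).y = 0 := rfl
@[simp] theorem one_m : (1 : BSQ k).m = 0 := rfl
@[simp] theorem inv_y (g : BSQ k) : g⁻¹.y = -g.y * (k : ℚ) ^ g.m := rfl
@[simp] theorem inv_m (g : BSQ k) : g⁻¹.m = -g.m := rfl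

theorem kq_ne_zero [Fact (1 < k)] : (k : ℚ) ≠ 0 := by
  have h : (1 : ℤ) < k := Fact.out
  have h' : (k : ℤ) ≠ 0 := by omega
  exact_mod_cast h'

private theorem mul_assoc' [Fact (1 < k)] (a b c : BSQ k) : a * b * c = a * (b * c) := by
  ext
  · simp only [mul_y, mul_m, neg_add, zpow_add₀ (kq_ne_zero (k := k))]
    ring
  · simp only [mul_m]
    ring

private theorem one_mul' [Fact (1 < k)] (a : BSQ k) : 1 * a = a := by
  ext <;> simp

private theorem mul_one' [Fact (1 < k)] (a : BSQ k) : a * 1 = a := by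
  ext <;> simp

private theorem inv_mul_cancel' [Fact (1 < k)] (a : BSQ k) : a⁻¹ * a = 1 := by
  ext
  · simp only [mul_y, inv_y, inv_m, one_y, neg_neg]
    ring
  · simp only [mul_m, inv_m, one_m]
    ring

/-- The group structure on `ℤ[1/k] ⋊ ℤ` (here on the ambient `ℚ ⋊ ℤ`). -/
instance [Fact (1 < k)] : Group (BSQ k) where
  mul := (· * ·)
  one := 1
  inv := Inv.inv
  mul_assoc := mul_assoc'
  one_mul := one_mul'
  mul_one := mul_one'
  inv_mul_cancel := inv_mul_cancel'

end BSQ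

/-- The group `G = ℤ[1/k] ⋊ ℤ`, as the subgroup of `ℚ ⋊ ℤ` of pairs whose first
coordinate lies in `ℤ[1/k]`. -/
def bsSubgroup (k : ℤ) [Fact (1 < k)] : Subgroup (BSQ k) where
  carrier := {g | g.y ∈ zkSet k}
  one_mem' := ⟨0, 0, by norm_num⟩
  mul_mem' := by
    intro a b ha hb
    exact zkSet_add BSQ.kq_ne_zero ha (zkSet_mul_zpow BSQ.kq_ne_zero hb _)
  inv_mem' := by
    intro a ha
    exact zkSet_mul_zpow BSQ.kq_ne_zero (zkSet_neg ha) _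

theorem mem_bsSubgroup {k : ℤ} [Fact (1 < k)] {g : BSQ k} (h : g.y ∈ zkSet k) :
    g ∈ bsSubgroup k := h

/-- The set `A = {(y,0) : y ∈ ℤ[1/k]}`. -/
def aSet (k : ℤ) : Set (BSQ k) := {g | g.y ∈ zkSet k ∧ g.m = 0}

/-- The set `Ab = {(y,1) : y ∈ ℤ[1/k]}`. -/
def abSet (k : ℤ) : Set (BSQ k) := {g | g.y ∈ zkSet k ∧ g.m = 1}

/-- The commutator `[x, y] = x⁻¹ y⁻¹ x y` (the paper's convention). -/
def gcomm {k : ℤ} [Fact (1 < k)] (x y : BSQ k) : BSQ k := x⁻¹ * y⁻¹ * x * y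


section Aux

theorem zkSet_mul {k : ℤ} (hk : (k : ℚ) ≠ 0) {p q : ℚ}
    (hp : p ∈ zkSet k) (hq : q ∈ zkSet k) : p * q ∈ zkSet k := by
  obtain ⟨z₁, i₁, rfl⟩ := hp
  obtain ⟨z₂, i₂, rfl⟩ := hq
  exact ⟨z₁ * z₂, i₁ + i₂, by push_cast; rw [zpow_add₀ hk]; ring⟩

theorem zkSet_intCast (k z : ℤ) : (z : ℚ) ∈ zkSet k := ⟨z, 0, by simp⟩

theorem zkSet_zpow (k : ℤ) (n : ℤ) : (k : ℚ) ^ n ∈ zkSet k := ⟨1, n, by simp⟩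

namespace BSQ

variable {k : ℤ} [Fact (1 < k)]

theorem m_pow (g : BSQ k) (n : ℕ) : (g ^ n).m = n * g.m := by
  induction n with
  | zero => simp [pow_zero]
  | succ n ih => rw [pow_succ]; rw [mul_m, ih]; push_cast; ring

theorem m_zpow (g : BSQ k) (n : ℤ) : (g ^ n).m = n * g.m := by
  rcases n with n | n
  · rw [Int.ofNat_eq_coe, zpow_natCast, m_pow]
  · rw [zpow_negSucc, inv_m, m_pow, Int.negSucc_eq]; push_cast; ring

theorem kpow_cancel (m : ℤ) : (k : ℚ) ^ (-m) * (k : ℚ) ^ m = 1 := by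
  rw [← zpow_add₀ (kq_ne_zero (k := k))]; simp

theorem gcomm_a (g : BSQ k) (t : ℚ) :
    gcomm g (⟨t, 0⟩ : BSQ k) = ⟨t * (1 - (k : ℚ) ^ g.m), 0⟩ := by
  have e := kpow_cancel (k := k) g.m
  ext
  · show (g⁻¹ * ⟨t,0⟩⁻¹ * g * ⟨t,0⟩).y = _
    simp only [mul_y, mul_m, inv_y, inv_m, zpow_zero, zpow_neg, neg_neg, neg_zero, add_zero,
      zero_add, mul_one, one_mul]
    rw [zpow_neg] at e
    field_simp
    simp
    ring
  · show (g⁻¹ * ⟨t,0⟩⁻¹ * g * ⟨t,0⟩).m = _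
    simp only [mul_m, inv_m]
    ring

theorem gcomm_u (u g : BSQ k) (hu : u.m = 0) :
    gcomm u g = ⟨u.y * ((k : ℚ) ^ g.m - 1), 0⟩ := by
  have e := kpow_cancel (k := k) g.m
  ext
  · show (u⁻¹ * g⁻¹ * u * g).y = _
    simp only [mul_y, mul_m, inv_y, inv_m, hu, zpow_zero, neg_zero, zero_add, add_zero,
      mul_one, one_mul, neg_neg, zpow_neg]
    rw [zpow_neg] at e
    field_simp
    ring
  · show (u⁻¹ * g⁻¹ * u * g).m = _
    simp only [mul_m, inv_m, hu]
    ring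

theorem mk_mul_mk (p q : ℚ) : (⟨p, 0⟩ : BSQ k) * ⟨q, 0⟩ = ⟨p + q, 0⟩ := by
  ext <;> simp

end BSQ

/-- The key polynomial identity: `(k^n - 1)^2` divides `k^{nz} - 1 - z(k^n - 1)` in `ℤ[1/k]`. -/
theorem exists_S (k : ℤ) [Fact (1 < k)] (n : ℤ) (z : ℤ) :
    ∃ S ∈ zkSet k, (k : ℚ) ^ (n * z) - 1 - (z : ℚ) * ((k : ℚ) ^ n - 1) =
      ((k : ℚ) ^ n - 1) ^ 2 * S := by
  have hk := BSQ.kq_ne_zero (k := k)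
  induction z using Int.induction_on with
  | zero => exact ⟨0, ⟨0, 0, by simp⟩, by simp⟩
  | succ z ih =>
      obtain ⟨S, hSmem, hS⟩ := ih
      refine ⟨(k : ℚ) ^ n * S + z, zkSet_add hk (zkSet_mul hk (zkSet_zpow k n) hSmem)
        (by exact_mod_cast zkSet_intCast k (z : ℤ)), ?_⟩
      have hrw : (k : ℚ) ^ (n * (z + 1)) = (k : ℚ) ^ (n * z) * (k : ℚ) ^ n := by
        rw [← zpow_add₀ hk]; ring_nf
      rw [hrw]
      push_cast at hS ⊢
      linear_combination (k : ℚ) ^ n * hS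
  | pred z ih =>
      obtain ⟨S, hSmem, hS⟩ := ih
      refine ⟨(k : ℚ) ^ (-n) * (S + 1 + (z : ℚ)), zkSet_mul hk (zkSet_zpow k (-n))
        (zkSet_add hk (zkSet_add hk hSmem ⟨1, 0, by simp⟩)
          (by exact_mod_cast zkSet_intCast k (z : ℤ))), ?_⟩
      have hrw : (k : ℚ) ^ (n * (-z - 1)) = (k : ℚ) ^ (n * (-z)) * (k : ℚ) ^ (-n) := by
        rw [← zpow_add₀ hk]; ring_nf
      have h1 : (k : ℚ) ^ (-n) * (k : ℚ) ^ n = 1 := BSQ.kpow_cancel n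
      rw [hrw]
      push_cast at hS ⊢
      linear_combination (k : ℚ) ^ (-n) * hS +
        (1 + (-(z : ℚ) - 1) * ((k : ℚ) ^ n - 1)) * h1

theorem zkSet_repr {k : ℤ} (hk : (k : ℚ) ≠ 0) {s : ℚ} (hs : s ∈ zkSet k) :
    ∃ c : ℤ, ∃ e : ℕ, s = (c : ℚ) / (k : ℚ) ^ e := by
  obtain ⟨m, i, rfl⟩ := hs
  rcases le_or_gt 0 i with h | h
  · refine ⟨m * k ^ i.toNat, 0, ?_⟩
    push_cast
    rw [← zpow_natCast (k : ℚ) i.toNat, Int.toNat_of_nonneg h]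
    simp
  · refine ⟨m, (-i).toNat, ?_⟩
    rw [← zpow_natCast (k : ℚ) (-i).toNat, Int.toNat_of_nonneg (by omega : (0:ℤ) ≤ -i)]
    rw [eq_div_iff (zpow_ne_zero _ hk), mul_assoc, ← zpow_add₀ hk]
    simp

theorem dvd_of_eq_mul {k : ℤ} (hk1 : 1 < k) (c0 : ℤ) (e : ℕ) (n : ℕ) (hn : 1 ≤ n)
    {cn : ℚ} (hcn : cn ∈ zkSet k)
    (heq : (c0 : ℚ) / (k : ℚ) ^ e = cn * ((k : ℚ) ^ (n : ℤ) - 1)) :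
    ((k : ℤ) ^ n - 1) ∣ c0 := by
  have hkq : (k : ℚ) ≠ 0 := by exact_mod_cast (by omega : (k:ℤ) ≠ 0)
  obtain ⟨m, i, rfl⟩ := hcn
  have hcop : IsCoprime ((k : ℤ) ^ n - 1) k := by
    refine ⟨-1, k ^ (n - 1), ?_⟩
    have : k ^ (n - 1) * k = k ^ n := by
      rw [← pow_succ]
      congr 1
      omega
    rw [this]; ring
  have key : (c0 : ℚ) = (m : ℚ) * (k : ℚ) ^ (i + e) * ((k : ℚ) ^ n - 1) := by
    rw [div_eq_iff (pow_ne_zero _ hkq)] at heq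
    rw [zpow_add₀ hkq, zpow_natCast] at *
    rw [heq, ← zpow_natCast (k : ℚ) e]
    ring
  rcases le_or_gt 0 (i + e) with h | h
  · have hpow : (k : ℚ) ^ (i + e) = (k : ℚ) ^ ((i + e).toNat) := by
      rw [← zpow_natCast (k : ℚ), Int.toNat_of_nonneg h]
    rw [hpow] at key
    have keyZ : c0 = m * k ^ (i + e).toNat * (k ^ n - 1) := by exact_mod_cast key
    exact ⟨m * k ^ (i + e).toNat, by rw [keyZ]; ring⟩
  · have hpow : ((k : ℚ)) ^ ((-(i + e)).toNat) = (k : ℚ) ^ (-(i + e)) := by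
      rw [← zpow_natCast (k : ℚ), Int.toNat_of_nonneg (by omega : (0:ℤ) ≤ -(i + e))]
    have hc : (k : ℚ) ^ (i + e) * (k : ℚ) ^ (-(i + e)) = 1 := by
      rw [← zpow_add₀ hkq, add_neg_cancel, zpow_zero]
    have keyQ : (c0 : ℚ) * (k : ℚ) ^ ((-(i + e)).toNat) = (m : ℚ) * ((k : ℚ) ^ n - 1) := by
      rw [hpow]
      linear_combination (k : ℚ) ^ (-(i + e)) * key + ((m : ℚ) * ((k : ℚ) ^ n - 1)) * hc
    have keyZ : c0 * k ^ (-(i + e)).toNat = m * (k ^ n - 1) := by exact_mod_cast keyQ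
    have hdvd : ((k : ℤ) ^ n - 1) ∣ c0 * k ^ (-(i + e)).toNat := ⟨m, by rw [keyZ]; ring⟩
    exact (hcop.pow_right).dvd_of_dvd_mul_right hdvd

theorem r_eq_zero {k : ℤ} (hk1 : 1 < k) {r : ℚ} (hr : r ∈ zkSet k)
    (h : ∀ n : ℕ, 1 ≤ n → ∃ c ∈ zkSet k, r = c * ((k : ℚ) ^ (n : ℤ) - 1)) : r = 0 := by
  obtain ⟨c0, e, rfl⟩ := zkSet_repr (by exact_mod_cast (by omega : (k:ℤ) ≠ 0)) hr
  suffices hc : c0 = 0 by simp [hc]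
  by_contra hc0
  obtain ⟨n, hn⟩ := pow_unbounded_of_one_lt (|c0| + 1) hk1
  have habs : 0 ≤ |c0| := abs_nonneg c0
  have hn1 : 1 ≤ n := by
    by_contra hn1
    interval_cases n
    simp at hn
    omega
  obtain ⟨c, hcmem, hceq⟩ := h n hn1
  have hdvd := dvd_of_eq_mul hk1 c0 e n hn1 hcmem hceq
  have := Int.le_of_dvd (abs_pos.mpr hc0) ((dvd_abs _ _).mpr hdvd)
  omega

end Aux

/-- **Lemma 9 (definability of multiplication by an integer).** For `b₁ ∈ Ab`,
`l, t ∈ ℤ[1/k]` and `z ∈ ℤ`: `l·z = t` iff for every integer `n` there exists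
`u ∈ A` with `[b₁^n, (t,0)] = [b₁^{n·z}, (l,0)]·[b₁^n, [u, b₁^n]]` in
`G = ℤ[1/k] ⋊ ℤ`. -/
theorem mul_int_eq_iff_commutator_condition (k : ℤ) [Fact (1 < k)] (b₁ : BSQ k)
    (hb : b₁ ∈ abSet k) (l t : ℚ) (hl : l ∈ zkSet k) (ht : t ∈ zkSet k) (z : ℤ) :
    l * (z : ℚ) = t ↔
      ∀ n : ℤ, ∃ u ∈ aSet k,
        gcomm (b₁ ^ n) (⟨t, 0⟩ : BSQ k) =
          gcomm (b₁ ^ (n * z)) (⟨l, 0⟩ : BSQ k) *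
            gcomm (b₁ ^ n) (gcomm u (b₁ ^ n)) := by
  have hk := BSQ.kq_ne_zero (k := k)
  have hk1 : (1 : ℤ) < k := Fact.out
  have hbm : b₁.m = 1 := hb.2
  have hmn : ∀ n : ℤ, (b₁ ^ n).m = n := fun n => by rw [BSQ.m_zpow, hbm, mul_one]
  constructor
  · intro hlz n
    obtain ⟨S, hSmem, hS⟩ := exists_S k n z
    refine ⟨⟨-(l * S), 0⟩, ⟨zkSet_neg (zkSet_mul hk hl hSmem), rfl⟩, ?_⟩
    rw [BSQ.gcomm_u ⟨-(l * S), 0⟩ (b₁ ^ n) rfl]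
    rw [BSQ.gcomm_a (b₁ ^ n) t, BSQ.gcomm_a (b₁ ^ n) _, BSQ.gcomm_a (b₁ ^ (n * z)) l]
    rw [hmn n, hmn (n * z), BSQ.mk_mul_mk]
    have hy : t * (1 - (k:ℚ) ^ n) = l * (1 - (k:ℚ) ^ (n * z)) +
        -(l * S) * ((k:ℚ) ^ n - 1) * (1 - (k:ℚ) ^ n) := by
      linear_combination l * hS + ((k:ℚ)^n - 1) * hlz
    rw [hy]
  · intro H
    have key : ∀ n : ℕ, 1 ≤ n → ∃ c ∈ zkSet k,
        l * (z : ℚ) - t = c * ((k : ℚ) ^ (n : ℤ) - 1) := by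
      intro n hn
      obtain ⟨u, ⟨huy, hum⟩, heq⟩ := H (n : ℤ)
      obtain ⟨S, hSmem, hS⟩ := exists_S k (n : ℤ) z
      rw [BSQ.gcomm_u u (b₁ ^ (n:ℤ)) hum] at heq
      rw [BSQ.gcomm_a (b₁ ^ (n:ℤ)) t, BSQ.gcomm_a (b₁ ^ (n:ℤ)) _,
        BSQ.gcomm_a (b₁ ^ ((n:ℤ) * z)) l] at heq
      rw [hmn (n:ℤ), hmn ((n:ℤ) * z), BSQ.mk_mul_mk] at heq
      have hy : t * (1 - (k:ℚ) ^ (n:ℤ)) = l * (1 - (k:ℚ) ^ ((n:ℤ) * z)) +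
          u.y * ((k:ℚ) ^ (n:ℤ) - 1) * (1 - (k:ℚ) ^ (n:ℤ)) := congrArg BSQ.y heq
      have hne : (k:ℚ) ^ ((n:ℤ)) - 1 ≠ 0 := by
        have h2 : (1 : ℚ) < (k:ℚ) ^ ((n:ℤ)) := by
          rw [zpow_natCast]
          exact_mod_cast one_lt_pow₀ hk1 (by omega)
        intro hcc
        rw [sub_eq_zero] at hcc
        rw [hcc] at h2
        exact lt_irrefl 1 h2
      refine ⟨-(u.y + l * S), zkSet_neg (zkSet_add hk huy (zkSet_mul hk hl hSmem)), ?_⟩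
      apply mul_right_cancel₀ hne
      linear_combination hy - l * hS
    have hr : l * (z : ℚ) - t ∈ zkSet k := by
      rw [sub_eq_add_neg]
      exact zkSet_add hk (zkSet_mul hk hl (zkSet_intCast k z)) (zkSet_neg ht)
    have := r_eq_zero hk1 hr key
    linarith [this]
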